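/- Let G be a finite abelian group of odd order. Then G is isomorphic to the group of units of some commutative ring if and only if G is isomorphic to the group of units of a finite direct product of finite fields of characteristic 2. -/

import Mathlib

open Polynomial

lemma eq_one_of_pow_two_pow {M : Type*} [Group M] [Finite M] (hodd : Odd (Nat.card M))
    (u : M) (k : ℕ) (h : u ^ 2 ^ k = 1) : u = 1 := by
  have h1 : orderOf u ∣ 2 ^ k := orderOf_dvd_of_pow_eq_one h
  have h2 : orderOf u ∣ Nat.card M := orderOf_dvd_natCard u
  have hc : Nat.Coprime (2 ^ k) (Nat.card M) :=
    Nat.Coprime.pow_left _ (Nat.coprime_two_left.mpr hodd)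
  exact orderOf_eq_one_iff.mp (Nat.eq_one_of_dvd_coprimes hc h1 h2)

lemma two_eq_zero_of_oddUnits {R : Type*} [CommRing R] [Finite Rˣ]
    (hodd : Odd (Nat.card Rˣ)) : (2 : R) = 0 := by
  have h : ((-1 : Rˣ) : R) = ((1 : Rˣ) : R) := by
    rw [eq_one_of_pow_two_pow hodd (-1 : Rˣ) 1 (by norm_num)]
  simp only [Units.val_neg, Units.val_one] at h
  linear_combination -h

lemma finite_ring_case (R : Type) [CommRing R] [Finite R] (hodd : Odd (Nat.card Rˣ)) :
    ∃ (t : ℕ) (n : Fin t → ℕ), (∀ i, 0 < n i) ∧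
      Nonempty (Rˣ ≃* (∀ i, GaloisField 2 (n i))ˣ) := by
  by_cases hsub : Subsingleton R
  · haveI : Inhabited R := ⟨0⟩
    haveI := Unique.mk' R
    exact ⟨0, fun _ => 1, fun i => i.elim0, ⟨MulEquiv.ofUnique⟩⟩
  · haveI : Nontrivial R := not_subsingleton_iff_nontrivial.mp hsub
    have h2 : (2 : R) = 0 := two_eq_zero_of_oddUnits hodd
    haveI hchar : CharP R 2 := by
      have hd : ringChar R ∣ 2 := ringChar.dvd h2
      rcases (Nat.prime_two.eq_one_or_self_of_dvd _ hd) with h1 | h1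
      · exfalso
        haveI : CharP R 1 := h1 ▸ ringChar.charP R
        exact CharP.false_of_nontrivial_of_char_one (R := R)
      · exact h1 ▸ ringChar.charP R
    haveI : IsReduced R := by
      constructor
      intro x hx
      obtain ⟨m, hm⟩ := hx
      have hxm : x ^ 2 ^ m = 0 := by
        rw [← Nat.sub_add_cancel (Nat.lt_two_pow_self (n := m)).le, pow_add, hm, mul_zero]
      have hpow : (1 + x) ^ 2 ^ m = 1 := by
        rw [add_pow_char_pow, one_pow, hxm, add_zero]
      have hunit : (1 + x) * ((1 + x) ^ (2 ^ m - 1)) = 1 := by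
        rw [← pow_succ', Nat.sub_add_cancel (Nat.one_le_two_pow), hpow]
      set u : Rˣ := ⟨1 + x, (1 + x) ^ (2 ^ m - 1), hunit, by rw [mul_comm]; exact hunit⟩
      have hu : u ^ 2 ^ m = 1 := Units.ext (by simpa using hpow)
      have h1 := congrArg Units.val (eq_one_of_pow_two_pow hodd u m hu)
      simp only [u, Units.val_one] at h1
      linear_combination h1
    -- now use equivPi
    haveI : Finite {I : Ideal R | I.IsMaximal} := (IsArtinianRing.setOfPred_isMaximal_finite R).to_subtype
    letI : ∀ I : {I : Ideal R | I.IsMaximal}, Field (R ⧸ I.1) :=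
      fun I => @Ideal.Quotient.field _ _ I.1 I.2
    haveI : Fact (Nat.Prime 2) := ⟨Nat.prime_two⟩
    let e : R ≃+* (∀ I : {I : Ideal R | I.IsMaximal}, R ⧸ I.1) :=
      (IsArtinianRing.equivPi R).toRingEquiv.trans
        (RingEquiv.piCongrLeft' (fun I : MaximalSpectrum R => R ⧸ I.asIdeal)
          (MaximalSpectrum.equivSubtype R))
    have key : ∀ I : {I : Ideal R | I.IsMaximal}, ∃ n : ℕ, 0 < n ∧
        Nonempty ((R ⧸ I.1) ≃+* GaloisField 2 n) := by
      intro I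
      haveI : Finite (R ⧸ I.1) := Finite.of_surjective _ (Ideal.Quotient.mk_surjective (I := I.1))
      haveI : Fintype (R ⧸ I.1) := Fintype.ofFinite _
      haveI : CharP (R ⧸ I.1) 2 := by
        have h2' : (2 : R ⧸ I.1) = 0 := by
          have : ((2 : R) : R ⧸ I.1) = 0 := by rw [h2]; simp
          convert this using 1
          exact (map_ofNat (Ideal.Quotient.mk I.1) 2).symm
        have hd : ringChar (R ⧸ I.1) ∣ 2 := ringChar.dvd h2'
        rcases (Nat.prime_two.eq_one_or_self_of_dvd _ hd) with h1 | h1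
        · exfalso
          haveI : CharP (R ⧸ I.1) 1 := h1 ▸ ringChar.charP _
          exact CharP.false_of_nontrivial_of_char_one (R := R ⧸ I.1)
        · exact h1 ▸ ringChar.charP _
      obtain ⟨nI, -, hcard⟩ := FiniteField.card (R ⧸ I.1) 2
      letI : Algebra (ZMod 2) (R ⧸ I.1) := ZMod.algebra _ 2
      have hn : Nat.card (R ⧸ I.1) = 2 ^ (nI : ℕ) := by
        rw [Nat.card_eq_fintype_card, hcard]
      exact ⟨nI, nI.2, ⟨(GaloisField.algEquivGaloisField 2 nI hn).toRingEquiv⟩⟩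
    choose nfun hpos hequiv using key
    haveI : Fintype {I : Ideal R | I.IsMaximal} := Fintype.ofFinite _
    let t := Fintype.card {I : Ideal R | I.IsMaximal}
    let σ : {I : Ideal R | I.IsMaximal} ≃ Fin t := Fintype.equivFin _
    refine ⟨t, fun i => nfun (σ.symm i), fun i => hpos _, ?_⟩
    have e2 : (∀ I : {I : Ideal R | I.IsMaximal}, R ⧸ I.1) ≃+*
        (∀ I : {I : Ideal R | I.IsMaximal}, GaloisField 2 (nfun I)) :=
      RingEquiv.piCongrRight (fun I => Classical.choice (hequiv I))
    have e3 : (∀ I : {I : Ideal R | I.IsMaximal}, GaloisField 2 (nfun I)) ≃+*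
        (∀ i : Fin t, GaloisField 2 (nfun (σ.symm i))) :=
      RingEquiv.piCongrLeft' (fun I => GaloisField 2 (nfun I)) σ
    exact ⟨Units.mapEquiv ((e.trans e2).trans e3).toMulEquiv⟩

lemma charP_two_of_two_eq_zero (R : Type*) [NonAssocRing R] [Nontrivial R]
    (h2 : (2 : R) = 0) : CharP R 2 := by
  have hd : ringChar R ∣ 2 := ringChar.dvd h2
  rcases (Nat.prime_two.eq_one_or_self_of_dvd _ hd) with h1 | h1
  · exfalso
    haveI : CharP R 1 := h1 ▸ ringChar.charP R
    exact CharP.false_of_nontrivial_of_char_one (R := R)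
  · exact h1 ▸ ringChar.charP R

/-- A finite abelian group `G` of odd order is isomorphic to the group of units
of some commutative ring if and only if it is isomorphic to the group of units
of a finite direct product of finite fields of characteristic 2 (every finite
field of characteristic 2 being isomorphic to some `GaloisField 2 n` with
`n ≥ 1`). -/
theorem odd_order_group_is_unit_group_iff
    (G : Type*) [CommGroup G] [Finite G] (hodd : Odd (Nat.card G)) :
    (∃ (R : Type) (_ : CommRing R), Nonempty (G ≃* Rˣ)) ↔
      (∃ (t : ℕ) (n : Fin t → ℕ), (∀ i, 0 < n i) ∧
        Nonempty (G ≃* (∀ i, GaloisField 2 (n i))ˣ)) := by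
  constructor
  · rintro ⟨R, _, ⟨e⟩⟩
    haveI : Finite Rˣ := Finite.of_equiv G e.toEquiv
    have hoddR : Odd (Nat.card Rˣ) := (Nat.card_congr e.toEquiv) ▸ hodd
    by_cases hsub : Subsingleton R
    · haveI : Inhabited R := ⟨0⟩
      haveI := Unique.mk' R
      haveI : Unique G := Equiv.unique e.toEquiv
      exact ⟨0, fun _ => 1, fun i => i.elim0, ⟨MulEquiv.ofUnique⟩⟩
    · haveI : Nontrivial R := not_subsingleton_iff_nontrivial.mp hsub
      have h2 : (2 : R) = 0 := two_eq_zero_of_oddUnits hoddR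
      haveI : CharP R 2 := charP_two_of_two_eq_zero R h2
      letI : Algebra (ZMod 2) R := ZMod.algebra _ 2
      set s : Set R := Set.range (Units.val : Rˣ → R) with hs
      set S := Algebra.adjoin (ZMod 2) s with hS
      have hmem : ∀ u : Rˣ, (u : R) ∈ S := fun u => Algebra.subset_adjoin ⟨u, rfl⟩
      have hN : 0 < Nat.card Rˣ := Nat.card_pos
      have hint : ∀ x ∈ s, IsIntegral (ZMod 2) x := by
        rintro x ⟨u, rfl⟩
        refine ⟨X ^ Nat.card Rˣ - C 1, monic_X_pow_sub_C _ hN.ne', ?_⟩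
        have hxN : (u : R) ^ Nat.card Rˣ = 1 := by
          rw [← Units.val_pow_eq_pow_val, pow_card_eq_one', Units.val_one]
        rw [eval₂_sub, eval₂_X_pow, eval₂_C, hxN, map_one, sub_self]
      have hfg : (Subalgebra.toSubmodule S).FG :=
        fg_adjoin_of_finite (Set.finite_range _) hint
      haveI : Module.Finite (ZMod 2) S :=
        ⟨(Submodule.fg_top (Subalgebra.toSubmodule S)).mpr hfg⟩
      haveI : Finite S := Module.finite_of_finite (ZMod 2)
      let φ : Rˣ ≃* Sˣ :=
      { toFun := fun u => ⟨⟨(u : R), hmem u⟩, ⟨((u⁻¹ : Rˣ) : R), hmem u⁻¹⟩,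
          Subtype.ext (by simp), Subtype.ext (by simp)⟩
        invFun := Units.map (S.val.toRingHom.toMonoidHom)
        left_inv := fun u => Units.ext rfl
        right_inv := fun v => Units.ext (Subtype.ext rfl)
        map_mul' := fun u v => Units.ext (Subtype.ext rfl) }
      have hoddS : Odd (Nat.card Sˣ) := (Nat.card_congr φ.toEquiv) ▸ hoddR
      obtain ⟨t, n, hpos, ⟨ψ⟩⟩ := finite_ring_case S hoddS
      exact ⟨t, n, hpos, ⟨(e.trans φ).trans ψ⟩⟩
  · rintro ⟨t, n, hpos, ⟨e⟩⟩
    haveI : Fact (Nat.Prime 2) := ⟨Nat.prime_two⟩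
    exact ⟨(∀ i, GaloisField 2 (n i)), inferInstance, ⟨e⟩⟩
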